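/- The graded connected bialgebra of rooted trees admits an antipode S, satisfying the recursion S(t) = -t - Σ_{c proper admissible cut} P_c(t)·S(R_c(t)) for every rooted tree t. -/

import Mathlib

open TensorProduct

noncomputable section

/-- The Hopf algebra of rooted trees as a commutative algebra: the free commutative
`ℚ`-algebra on rooted trees, i.e. the monoid algebra of the commutative monoid of
forests (multisets of trees). -/
abbrev Hrt (T : Type) : Type := AddMonoidAlgebra ℚ (Multiset T)

/-- The basis element of `Hrt T` corresponding to a forest `F`. -/
def frt {T : Type} (F : Multiset T) : Hrt T := AddMonoidAlgebra.single F 1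

/-- The basis element of `Hrt T` corresponding to a single rooted tree `t`. -/
def tre {T : Type} (t : T) : Hrt T := frt {t}


namespace RTproof
variable {T : Type}

lemma frt_zero : frt (0 : Multiset T) = 1 := rfl

lemma frt_mul (F G : Multiset T) : frt F * frt G = frt (F + G) := by
  simp [frt, AddMonoidAlgebra.single_mul_single]

lemma frt_prod (F : Multiset T) : frt F = (F.map tre).prod := by
  induction F using Multiset.induction with
  | empty => simp [frt_zero]
  | cons s F ih =>
    rw [Multiset.map_cons, Multiset.prod_cons, ← ih, tre, frt_mul, Multiset.singleton_add]

/-- Lift a tree-indexed family to an algebra hom on `Hrt`. -/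
def lifA (A : T → Hrt T) : Hrt T →ₐ[ℚ] Hrt T :=
  AddMonoidAlgebra.lift ℚ (Hrt T) (Multiset T)
    { toFun := fun F => ((Multiplicative.toAdd F).map A).prod
      map_one' := by simp
      map_mul' := fun F G => by
        simp [Multiset.prod_add] }

lemma lifA_frt (A : T → Hrt T) (F : Multiset T) : lifA A (frt F) = (F.map A).prod := by
  simp [lifA, frt, AddMonoidAlgebra.lift_single]
  rfl

lemma lifA_tre (A : T → Hrt T) (t : T) : lifA A (tre t) = A t := by
  simp [tre, lifA_frt]

section deg
variable (B : Multiset T → T) (hB : Function.Bijective B)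

def rel (s t : T) : Prop := ∃ F, B F = t ∧ s ∈ F

lemma rel_wf (hB : Function.Bijective B) (hind : ∀ P : T → Prop,
    (∀ F : Multiset T, (∀ s ∈ F, P s) → P (B F)) → ∀ t, P t) :
    WellFounded (rel B) := by
  constructor
  refine hind (Acc (rel B)) (fun F hF => ?_)
  constructor
  rintro s ⟨G, hG, hs⟩
  have : G = F := hB.1 hG
  exact hF s (this ▸ hs)

def Binv : T → Multiset T := Function.surjInv hB.2

lemma B_Binv (t : T) : B (Binv B hB t) = t := Function.surjInv_eq hB.2 t

lemma Binv_B (F : Multiset T) : Binv B hB (B F) = F := hB.1 (B_Binv B hB (B F))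

variable (hwf : WellFounded (rel B))

def deg : T → ℕ :=
  hwf.fix (fun t ih => 1 + ((Binv B hB t).attach.map
    (fun s => ih s.1 ⟨Binv B hB t, B_Binv B hB t, s.2⟩)).sum)

lemma deg_eq (t : T) : deg B hB hwf t = 1 + ((Binv B hB t).map (deg B hB hwf)).sum := by
  have h1 : deg B hB hwf t
      = 1 + ((Binv B hB t).attach.map (fun s => deg B hB hwf s.1)).sum := by
    conv_lhs => rw [deg, WellFounded.fix_eq]
    rfl
  rw [h1]
  congr 1
  rw [show (fun s : {x // x ∈ Binv B hB t} => deg B hB hwf s.1)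
      = (deg B hB hwf) ∘ Subtype.val from rfl, ← Multiset.map_map, Multiset.attach_map_val]

def degF (F : Multiset T) : ℕ := (F.map (deg B hB hwf)).sum

lemma deg_B (F : Multiset T) : deg B hB hwf (B F) = 1 + degF B hB hwf F := by
  rw [deg_eq, Binv_B]; rfl

lemma deg_pos (t : T) : 1 ≤ deg B hB hwf t := by
  rw [deg_eq]; omega

lemma deg_le_degF {s : T} {F : Multiset T} (hs : s ∈ F) :
    deg B hB hwf s ≤ degF B hB hwf F :=
  Multiset.single_le_sum (fun x _ => Nat.zero_le x) _ (Multiset.mem_map_of_mem _ hs)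

lemma degF_cons (s : T) (F : Multiset T) :
    degF B hB hwf (s ::ₘ F) = deg B hB hwf s + degF B hB hwf F := by
  simp [degF]

end deg

section main
variable (B : Multiset T → T) (hB : Function.Bijective B) (hwf : WellFounded (rel B))
variable (Bp : Hrt T →ₗ[ℚ] Hrt T)
variable (Δ : Hrt T →ₐ[ℚ] Hrt T ⊗[ℚ] Hrt T)

-- counit scalar on forests
open Classical in
def e (F : Multiset T) : ℚ := if F = 0 then 1 else 0

lemma e_zero : e (0 : Multiset T) = 1 := by simp [e]

lemma e_ne {F : Multiset T} (h : F ≠ 0) : e F = 0 := by simp [e, h]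

/-- filtration submodule: span of `frt G ⊗ frt H` with `degF G ≤ a`, `degF H ≤ b`. -/
def W (a b : ℕ) : Submodule ℚ (Hrt T ⊗[ℚ] Hrt T) :=
  Submodule.span ℚ {x | ∃ G H : Multiset T,
    degF B hB hwf G ≤ a ∧ degF B hB hwf H ≤ b ∧ x = frt G ⊗ₜ[ℚ] frt H}

lemma mem_W {a b : ℕ} {G H : Multiset T}
    (hG : degF B hB hwf G ≤ a) (hH : degF B hB hwf H ≤ b) :
    frt G ⊗ₜ[ℚ] frt H ∈ W B hB hwf a b :=
  Submodule.subset_span ⟨G, H, hG, hH, rfl⟩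

lemma W_mono {a b a' b' : ℕ} (ha : a ≤ a') (hb : b ≤ b') :
    W B hB hwf a b ≤ W B hB hwf a' b' := by
  apply Submodule.span_le.2
  rintro x ⟨G, H, hG, hH, rfl⟩
  exact mem_W B hB hwf (hG.trans ha) (hH.trans hb)

lemma W_mul_W {a b c d : ℕ} {x y : Hrt T ⊗[ℚ] Hrt T}
    (hx : x ∈ W B hB hwf a b) (hy : y ∈ W B hB hwf c d) :
    x * y ∈ W B hB hwf (a + c) (b + d) := by
  induction hx using Submodule.span_induction with
  | mem x hx =>
    obtain ⟨G, H, hG, hH, rfl⟩ := hx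
    induction hy using Submodule.span_induction with
    | mem y hy =>
      obtain ⟨G', H', hG', hH', rfl⟩ := hy
      rw [Algebra.TensorProduct.tmul_mul_tmul, frt_mul, frt_mul]
      refine mem_W B hB hwf ?_ ?_
      · simpa [degF, Nat.add_comm] using Nat.add_le_add hG hG'
      · simpa [degF, Nat.add_comm] using Nat.add_le_add hH hH'
    | zero => simp
    | add y z hy hz ihy ihz => rw [mul_add]; exact add_mem ihy ihz
    | smul r y hy ihy => rw [mul_smul_comm]; exact Submodule.smul_mem _ r ihy
  | zero => simp
  | add x z hx hz ihx ihz => rw [add_mul]; exact add_mem ihx ihz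
  | smul r x hx ihx => rw [smul_mul_assoc]; exact Submodule.smul_mem _ r ihx

lemma lTensor_W {a b : ℕ} {z : Hrt T ⊗[ℚ] Hrt T}
    (hBp : ∀ F : Multiset T, Bp (frt F) = tre (B F))
    (hz : z ∈ W B hB hwf a b) :
    LinearMap.lTensor (Hrt T) Bp z ∈ W B hB hwf a (b + 1) := by
  induction hz using Submodule.span_induction with
  | mem x hx =>
    obtain ⟨G, H, hG, hH, rfl⟩ := hx
    rw [LinearMap.lTensor_tmul, hBp H]
    refine mem_W B hB hwf hG ?_
    show degF B hB hwf {B H} ≤ b + 1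
    have : degF B hB hwf {B H} = deg B hB hwf (B H) := by simp [degF]
    rw [this, deg_B]
    omega
  | zero => rw [LinearMap.map_zero]; exact zero_mem _
  | add x y hx hy ihx ihy => rw [LinearMap.map_add]; exact add_mem ihx ihy
  | smul r x hx ihx => rw [LinearMap.map_smul]; exact Submodule.smul_mem _ r ihx

lemma degF_pos {F : Multiset T} (hF : F ≠ 0) : 1 ≤ degF B hB hwf F := by
  obtain ⟨s, hs⟩ := Multiset.exists_mem_of_ne_zero hF
  exact le_trans (deg_pos B hB hwf s) (deg_le_degF B hB hwf hs)

lemma SL_forest (F : Multiset T)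
    (h : ∀ s ∈ F, Δ (tre s) - tre s ⊗ₜ[ℚ] 1 - 1 ⊗ₜ[ℚ] tre s
      ∈ W B hB hwf (deg B hB hwf s - 1) (deg B hB hwf s - 1)) :
    Δ (frt F) - frt F ⊗ₜ[ℚ] 1 - 1 ⊗ₜ[ℚ] frt F + e F • ((1 : Hrt T) ⊗ₜ[ℚ] (1 : Hrt T))
      ∈ W B hB hwf (degF B hB hwf F - 1) (degF B hB hwf F - 1) := by
  induction F using Multiset.induction with
  | empty =>
    have : Δ (frt (0 : Multiset T)) - frt (0:Multiset T) ⊗ₜ[ℚ] 1 - 1 ⊗ₜ[ℚ] frt (0:Multiset T)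
        + e (0 : Multiset T) • ((1 : Hrt T) ⊗ₜ[ℚ] (1 : Hrt T)) = 0 := by
      rw [frt_zero, map_one, e_zero]
      simp [Algebra.TensorProduct.one_def]
    rw [this]
    exact zero_mem _
  | cons s F ih =>
    have hcomp : ∀ s' ∈ F, Δ (tre s') - tre s' ⊗ₜ[ℚ] 1 - 1 ⊗ₜ[ℚ] tre s'
        ∈ W B hB hwf (deg B hB hwf s' - 1) (deg B hB hwf s' - 1) :=
      fun s' hs' => h s' (Multiset.mem_cons_of_mem hs')
    have hY0 := ih hcomp
    have hX0 := h s (Multiset.mem_cons_self s F)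
    obtain ⟨X, hXdef⟩ : ∃ X', X' = Δ (tre s) - tre s ⊗ₜ[ℚ] 1 - 1 ⊗ₜ[ℚ] tre s := ⟨_, rfl⟩
    rw [← hXdef] at hX0
    by_cases hF0 : F = 0
    · subst hF0
      have h0 : frt (s ::ₘ (0 : Multiset T)) = tre s := rfl
      have hdg : degF B hB hwf (s ::ₘ (0 : Multiset T)) = deg B hB hwf s := by
        simp [degF]
      rw [e_ne (Multiset.cons_ne_zero), zero_smul, add_zero, h0, hdg, ← hXdef]
      exact hX0
    · have he0 : e F = 0 := e_ne hF0
      rw [he0, zero_smul, add_zero] at hY0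
      obtain ⟨Y, hYdef⟩ : ∃ Y', Y' = Δ (frt F) - frt F ⊗ₜ[ℚ] 1 - 1 ⊗ₜ[ℚ] frt F := ⟨_, rfl⟩
      rw [← hYdef] at hY0
      have hmul : frt (s ::ₘ F) = tre s * frt F := by
        rw [tre, frt_mul, Multiset.singleton_add]
      have hΔs : Δ (tre s) = tre s ⊗ₜ[ℚ] 1 + 1 ⊗ₜ[ℚ] tre s + X := by
        rw [hXdef]; ring
      have hΔF : Δ (frt F) = frt F ⊗ₜ[ℚ] 1 + 1 ⊗ₜ[ℚ] frt F + Y := by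
        rw [hYdef]; ring
      have h1 : (tre s ⊗ₜ[ℚ] (1:Hrt T)) * (frt F ⊗ₜ[ℚ] (1:Hrt T))
          = (tre s * frt F) ⊗ₜ[ℚ] (1:Hrt T) := by
        rw [Algebra.TensorProduct.tmul_mul_tmul, mul_one]
      have h2 : (tre s ⊗ₜ[ℚ] (1:Hrt T)) * ((1:Hrt T) ⊗ₜ[ℚ] frt F)
          = tre s ⊗ₜ[ℚ] frt F := by
        rw [Algebra.TensorProduct.tmul_mul_tmul, mul_one, one_mul]
      have h4 : ((1:Hrt T) ⊗ₜ[ℚ] tre s) * (frt F ⊗ₜ[ℚ] (1:Hrt T))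
          = frt F ⊗ₜ[ℚ] tre s := by
        rw [Algebra.TensorProduct.tmul_mul_tmul, mul_one, one_mul]
      have h5 : ((1:Hrt T) ⊗ₜ[ℚ] tre s) * ((1:Hrt T) ⊗ₜ[ℚ] frt F)
          = (1:Hrt T) ⊗ₜ[ℚ] (tre s * frt F) := by
        rw [Algebra.TensorProduct.tmul_mul_tmul, one_mul]
      have key : Δ (frt (s ::ₘ F)) - frt (s ::ₘ F) ⊗ₜ[ℚ] 1 - 1 ⊗ₜ[ℚ] frt (s ::ₘ F)
          + e (s ::ₘ F) • ((1 : Hrt T) ⊗ₜ[ℚ] (1 : Hrt T))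
          = tre s ⊗ₜ[ℚ] frt F + frt F ⊗ₜ[ℚ] tre s
            + (tre s ⊗ₜ[ℚ] (1:Hrt T)) * Y + ((1:Hrt T) ⊗ₜ[ℚ] tre s) * Y
            + X * Δ (frt F) := by
        rw [e_ne (Multiset.cons_ne_zero), zero_smul, add_zero, hmul, map_mul, hΔs]
        conv_lhs => rw [hΔF]
        linear_combination h1 + h2 + h4 + h5 - X * hΔF
      rw [key]
      have h1F : 1 ≤ degF B hB hwf F := degF_pos B hB hwf hF0
      have h1s : 1 ≤ deg B hB hwf s := deg_pos B hB hwf s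
      rw [degF_cons]
      set a := deg B hB hwf s with ha
      set b := degF B hB hwf F with hb
      refine add_mem (add_mem (add_mem (add_mem ?_ ?_) ?_) ?_) ?_
      · have := mem_W B hB hwf (G := {s}) (H := F) (a := a) (b := b)
          (by simp [degF, ha]) (le_refl b)
        exact W_mono B hB hwf (by omega) (by omega) this
      · have := mem_W B hB hwf (G := F) (H := {s}) (a := b) (b := a)
          (le_refl b) (by simp [degF, ha])
        exact W_mono B hB hwf (by omega) (by omega) this
      · have h1' : (tre s ⊗ₜ[ℚ] (1:Hrt T)) ∈ W B hB hwf a 0 := by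
          rw [← frt_zero, tre]
          exact mem_W B hB hwf (by simp [degF, ha]) (by simp [degF])
        have := W_mul_W B hB hwf h1' hY0
        exact W_mono B hB hwf (by omega) (by omega) this
      · have h1' : ((1:Hrt T) ⊗ₜ[ℚ] tre s) ∈ W B hB hwf 0 a := by
          rw [← frt_zero, tre]
          exact mem_W B hB hwf (by simp [degF]) (by simp [degF, ha])
        have := W_mul_W B hB hwf h1' hY0
        exact W_mono B hB hwf (by omega) (by omega) this
      · have hDF : Δ (frt F) ∈ W B hB hwf b b := by
          rw [hΔF]
          refine add_mem (add_mem ?_ ?_) ?_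
          · rw [show ((1:Hrt T) : Hrt T) = frt (0:Multiset T) from rfl]
            exact mem_W B hB hwf (le_refl b) (by simp [degF])
          · rw [show ((1:Hrt T) ⊗ₜ[ℚ] frt F) = frt (0:Multiset T) ⊗ₜ[ℚ] frt F from rfl]
            exact mem_W B hB hwf (by simp [degF]) (le_refl b)
          · exact W_mono B hB hwf (by omega) (by omega) hY0
        have := W_mul_W B hB hwf hX0 hDF
        exact W_mono B hB hwf (by omega) (by omega) this


lemma SL_tree (hBp : ∀ F : Multiset T, Bp (frt F) = tre (B F))
    (hΔ : ∀ F : Multiset T,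
      Δ (tre (B F)) = tre (B F) ⊗ₜ[ℚ] 1 + (LinearMap.lTensor (Hrt T) Bp) (Δ (frt F))) :
    ∀ n (t : T), deg B hB hwf t ≤ n →
      Δ (tre t) - tre t ⊗ₜ[ℚ] 1 - 1 ⊗ₜ[ℚ] tre t
        ∈ W B hB hwf (deg B hB hwf t - 1) (deg B hB hwf t - 1) := by
  intro n
  induction n with
  | zero =>
    intro t ht
    have := deg_pos B hB hwf t
    omega
  | succ n IH =>
    intro t ht
    obtain ⟨F, rfl⟩ : ∃ F, B F = t := ⟨Binv B hB t, B_Binv B hB t⟩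
    have hdt : deg B hB hwf (B F) = 1 + degF B hB hwf F := deg_B B hB hwf F
    have hcomp : ∀ s ∈ F, Δ (tre s) - tre s ⊗ₜ[ℚ] 1 - 1 ⊗ₜ[ℚ] tre s
        ∈ W B hB hwf (deg B hB hwf s - 1) (deg B hB hwf s - 1) := by
      intro s hs
      have h1 := deg_le_degF B hB hwf hs
      exact IH s (by omega)
    have hYF := SL_forest B hB hwf Δ F hcomp
    by_cases hF0 : F = 0
    · subst hF0
      have h1 : Δ (tre (B (0:Multiset T)))
          = tre (B (0:Multiset T)) ⊗ₜ[ℚ] 1 + 1 ⊗ₜ[ℚ] tre (B (0:Multiset T)) := by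
        rw [hΔ 0, frt_zero, map_one, Algebra.TensorProduct.one_def, LinearMap.lTensor_tmul]
        rw [show (1:Hrt T) = frt (0:Multiset T) from rfl, hBp]
      rw [h1]
      have : tre (B (0:Multiset T)) ⊗ₜ[ℚ] (1:Hrt T) + 1 ⊗ₜ[ℚ] tre (B (0:Multiset T))
          - tre (B (0:Multiset T)) ⊗ₜ[ℚ] 1 - 1 ⊗ₜ[ℚ] tre (B (0:Multiset T)) = 0 := by ring
      rw [this]
      exact zero_mem _
    · have he0 : e F = 0 := e_ne hF0
      rw [he0, zero_smul, add_zero] at hYF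
      obtain ⟨Y, hYdef⟩ : ∃ Y', Y' = Δ (frt F) - frt F ⊗ₜ[ℚ] 1 - 1 ⊗ₜ[ℚ] frt F := ⟨_, rfl⟩
      rw [← hYdef] at hYF
      have hΔF : Δ (frt F) = frt F ⊗ₜ[ℚ] 1 + 1 ⊗ₜ[ℚ] frt F + Y := by rw [hYdef]; ring
      have hb1 : 1 ≤ degF B hB hwf F := degF_pos B hB hwf hF0
      have key : Δ (tre (B F)) - tre (B F) ⊗ₜ[ℚ] 1 - 1 ⊗ₜ[ℚ] tre (B F)
          = frt F ⊗ₜ[ℚ] tre (B 0) + LinearMap.lTensor (Hrt T) Bp Y := by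
        rw [hΔ F, hΔF, LinearMap.map_add, LinearMap.map_add, LinearMap.lTensor_tmul,
          LinearMap.lTensor_tmul, show (1:Hrt T) = frt (0:Multiset T) from rfl,
          hBp, hBp]
        ring
      rw [key]
      refine add_mem ?_ ?_
      · have h2 : degF B hB hwf ({B (0:Multiset T)} : Multiset T) = 1 := by
          simp [degF, deg_B B hB hwf 0]
        have := mem_W B hB hwf (G := F) (H := {B (0:Multiset T)})
          (a := degF B hB hwf F) (b := 1) (le_refl _) (le_of_eq h2)
        exact W_mono B hB hwf (by omega) (by omega) this
      · have := lTensor_W B hB hwf Bp hBp hYF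
        exact W_mono B hB hwf (by omega) (by omega) this


section antipode
variable (hBp : ∀ F : Multiset T, Bp (frt F) = tre (B F))
variable (hΔ : ∀ F : Multiset T,
      Δ (tre (B F)) = tre (B F) ⊗ₜ[ℚ] 1 + (LinearMap.lTensor (Hrt T) Bp) (Δ (frt F)))

/-- truncations of the antipode on trees, "left" version -/
def gA : ℕ → T → Hrt T := fun n => Nat.rec (motive := fun _ => T → Hrt T)
  (fun _ => 0)
  (fun n ih t =>
    if deg B hB hwf t = n then
      - tre t - (LinearMap.mul' ℚ (Hrt T))
        ((LinearMap.lTensor (Hrt T) (lifA ih).toLinearMap)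
          (Δ (tre t) - tre t ⊗ₜ[ℚ] 1))
    else ih t) n

lemma gA_succ (n : ℕ) (t : T) : gA B hB hwf Δ (n+1) t =
    if deg B hB hwf t = n then
      - tre t - (LinearMap.mul' ℚ (Hrt T))
        ((LinearMap.lTensor (Hrt T) (lifA (gA B hB hwf Δ n)).toLinearMap)
          (Δ (tre t) - tre t ⊗ₜ[ℚ] 1))
    else gA B hB hwf Δ n t := rfl

/-- the antipode on trees, "left" version -/
def Aa (t : T) : Hrt T := gA B hB hwf Δ (deg B hB hwf t + 1) t

/-- the antipode, "left" version -/
def Sa : Hrt T →ₐ[ℚ] Hrt T := lifA (Aa B hB hwf Δ)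

lemma gA_of_lt : ∀ n (t : T), deg B hB hwf t < n → gA B hB hwf Δ n t = Aa B hB hwf Δ t := by
  intro n
  induction n with
  | zero => intro t h; omega
  | succ n IH =>
    intro t h
    by_cases hd : deg B hB hwf t = n
    · have h2 : Aa B hB hwf Δ t = gA B hB hwf Δ (n+1) t := by rw [Aa, hd]
      rw [h2]
    · rw [gA_succ, if_neg hd]
      exact IH t (by omega)

lemma gA_of_ge : ∀ n (t : T), n ≤ deg B hB hwf t → gA B hB hwf Δ n t = 0 := by
  intro n
  induction n with
  | zero => intro t h; rfl
  | succ n IH =>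
    intro t h
    rw [gA_succ, if_neg (by omega)]
    exact IH t (by omega)

lemma Sa_tre (t : T) : Sa B hB hwf Δ (tre t) = Aa B hB hwf Δ t := lifA_tre _ t

lemma trunc_eq_Sa {n : ℕ} {H : Multiset T} (h : degF B hB hwf H < n) :
    lifA (gA B hB hwf Δ n) (frt H) = Sa B hB hwf Δ (frt H) := by
  rw [Sa, lifA_frt, lifA_frt]
  congr 1
  apply Multiset.map_congr rfl
  intro s hs
  exact gA_of_lt B hB hwf Δ n s (lt_of_le_of_lt (deg_le_degF B hB hwf hs) h)

lemma mul_lTensor_W {n a b : ℕ} {z : Hrt T ⊗[ℚ] Hrt T} (hb : b < n)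
    (hz : z ∈ W B hB hwf a b) :
    (LinearMap.mul' ℚ (Hrt T))
      ((LinearMap.lTensor (Hrt T) (lifA (gA B hB hwf Δ n)).toLinearMap) z)
    = (LinearMap.mul' ℚ (Hrt T))
      ((LinearMap.lTensor (Hrt T) (Sa B hB hwf Δ).toLinearMap) z) := by
  induction hz using Submodule.span_induction with
  | mem x hx =>
    obtain ⟨G, H, hG, hH, rfl⟩ := hx
    rw [LinearMap.lTensor_tmul, LinearMap.lTensor_tmul]
    simp only [AlgHom.toLinearMap_apply, LinearMap.mul'_apply]
    rw [trunc_eq_Sa B hB hwf Δ (lt_of_le_of_lt hH hb)]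
  | zero => simp
  | add x y hx hy ihx ihy => simp only [LinearMap.map_add, ihx, ihy]
  | smul r x hx ihx => simp only [LinearMap.map_smul, ihx]

/-- the left antipode identity on trees -/
lemma left_id (hBp : ∀ F : Multiset T, Bp (frt F) = tre (B F))
    (hΔ : ∀ F : Multiset T,
      Δ (tre (B F)) = tre (B F) ⊗ₜ[ℚ] 1 + (LinearMap.lTensor (Hrt T) Bp) (Δ (frt F)))
    (t : T) :
    (LinearMap.mul' ℚ (Hrt T))
      ((LinearMap.lTensor (Hrt T) (Sa B hB hwf Δ).toLinearMap) (Δ (tre t))) = 0 := by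
  set n := deg B hB hwf t with hn
  have hn1 : 1 ≤ n := deg_pos B hB hwf t
  have hz := SL_tree B hB hwf Bp Δ hBp hΔ n t (le_refl n)
  obtain ⟨z, hzdef⟩ : ∃ z', z' = Δ (tre t) - tre t ⊗ₜ[ℚ] 1 - 1 ⊗ₜ[ℚ] tre t := ⟨_, rfl⟩
  rw [← hzdef] at hz
  have hΔt : Δ (tre t) = tre t ⊗ₜ[ℚ] 1 + 1 ⊗ₜ[ℚ] tre t + z := by rw [hzdef]; ring
  have hΔt' : Δ (tre t) - tre t ⊗ₜ[ℚ] 1 = 1 ⊗ₜ[ℚ] tre t + z := by rw [hzdef]; ring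
  have hAa : Aa B hB hwf Δ t
      = - tre t - (LinearMap.mul' ℚ (Hrt T))
        ((LinearMap.lTensor (Hrt T) (lifA (gA B hB hwf Δ n)).toLinearMap)
          (Δ (tre t) - tre t ⊗ₜ[ℚ] 1)) := by
    rw [Aa, gA_succ, if_pos rfl]
  have htr : (LinearMap.mul' ℚ (Hrt T))
      ((LinearMap.lTensor (Hrt T) (lifA (gA B hB hwf Δ n)).toLinearMap)
        (Δ (tre t) - tre t ⊗ₜ[ℚ] 1))
      = (LinearMap.mul' ℚ (Hrt T))
        ((LinearMap.lTensor (Hrt T) (Sa B hB hwf Δ).toLinearMap) z) := by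
    rw [hΔt', LinearMap.map_add, LinearMap.map_add, LinearMap.lTensor_tmul]
    simp only [AlgHom.toLinearMap_apply, LinearMap.map_add, LinearMap.mul'_apply]
    rw [show (lifA (gA B hB hwf Δ n)) (tre t) = gA B hB hwf Δ n t from lifA_tre _ t]
    rw [gA_of_ge B hB hwf Δ n t (le_of_eq hn.symm)]
    rw [mul_lTensor_W B hB hwf Δ (show n - 1 < n by omega) hz]
    simp
  rw [hΔt]
  simp only [LinearMap.map_add, LinearMap.lTensor_tmul, AlgHom.toLinearMap_apply,
    LinearMap.mul'_apply, map_one]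
  rw [Sa_tre, hAa, htr]
  ring

/-- truncations of the antipode on trees, "right" version -/
def gB : ℕ → T → Hrt T := fun n => Nat.rec (motive := fun _ => T → Hrt T)
  (fun _ => 0)
  (fun n ih t =>
    if deg B hB hwf t = n then
      - tre t - (LinearMap.mul' ℚ (Hrt T))
        ((LinearMap.rTensor (Hrt T) (lifA ih).toLinearMap)
          (Δ (tre t) - 1 ⊗ₜ[ℚ] tre t))
    else ih t) n

lemma gB_succ (n : ℕ) (t : T) : gB B hB hwf Δ (n+1) t =
    if deg B hB hwf t = n then
      - tre t - (LinearMap.mul' ℚ (Hrt T))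
        ((LinearMap.rTensor (Hrt T) (lifA (gB B hB hwf Δ n)).toLinearMap)
          (Δ (tre t) - 1 ⊗ₜ[ℚ] tre t))
    else gB B hB hwf Δ n t := rfl

/-- the antipode on trees, "right" version -/
def Ab (t : T) : Hrt T := gB B hB hwf Δ (deg B hB hwf t + 1) t

/-- the antipode, "right" version -/
def Sb : Hrt T →ₐ[ℚ] Hrt T := lifA (Ab B hB hwf Δ)

lemma gB_of_lt : ∀ n (t : T), deg B hB hwf t < n → gB B hB hwf Δ n t = Ab B hB hwf Δ t := by
  intro n
  induction n with
  | zero => intro t h; omega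
  | succ n IH =>
    intro t h
    by_cases hd : deg B hB hwf t = n
    · have h2 : Ab B hB hwf Δ t = gB B hB hwf Δ (n+1) t := by rw [Ab, hd]
      rw [h2]
    · rw [gB_succ, if_neg hd]
      exact IH t (by omega)

lemma gB_of_ge : ∀ n (t : T), n ≤ deg B hB hwf t → gB B hB hwf Δ n t = 0 := by
  intro n
  induction n with
  | zero => intro t h; rfl
  | succ n IH =>
    intro t h
    rw [gB_succ, if_neg (by omega)]
    exact IH t (by omega)

lemma Sb_tre (t : T) : Sb B hB hwf Δ (tre t) = Ab B hB hwf Δ t := lifA_tre _ t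

lemma trunc_eq_Sb {n : ℕ} {H : Multiset T} (h : degF B hB hwf H < n) :
    lifA (gB B hB hwf Δ n) (frt H) = Sb B hB hwf Δ (frt H) := by
  rw [Sb, lifA_frt, lifA_frt]
  congr 1
  apply Multiset.map_congr rfl
  intro s hs
  exact gB_of_lt B hB hwf Δ n s (lt_of_le_of_lt (deg_le_degF B hB hwf hs) h)

lemma mul_rTensor_W {n a b : ℕ} {z : Hrt T ⊗[ℚ] Hrt T} (ha : a < n)
    (hz : z ∈ W B hB hwf a b) :
    (LinearMap.mul' ℚ (Hrt T))
      ((LinearMap.rTensor (Hrt T) (lifA (gB B hB hwf Δ n)).toLinearMap) z)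
    = (LinearMap.mul' ℚ (Hrt T))
      ((LinearMap.rTensor (Hrt T) (Sb B hB hwf Δ).toLinearMap) z) := by
  induction hz using Submodule.span_induction with
  | mem x hx =>
    obtain ⟨G, H, hG, hH, rfl⟩ := hx
    rw [LinearMap.rTensor_tmul, LinearMap.rTensor_tmul]
    simp only [AlgHom.toLinearMap_apply, LinearMap.mul'_apply]
    rw [trunc_eq_Sb B hB hwf Δ (lt_of_le_of_lt hG ha)]
  | zero => simp
  | add x y hx hy ihx ihy => simp only [LinearMap.map_add, ihx, ihy]
  | smul r x hx ihx => simp only [LinearMap.map_smul, ihx]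

/-- the right antipode identity on trees -/
lemma right_id (hBp : ∀ F : Multiset T, Bp (frt F) = tre (B F))
    (hΔ : ∀ F : Multiset T,
      Δ (tre (B F)) = tre (B F) ⊗ₜ[ℚ] 1 + (LinearMap.lTensor (Hrt T) Bp) (Δ (frt F)))
    (t : T) :
    (LinearMap.mul' ℚ (Hrt T))
      ((LinearMap.rTensor (Hrt T) (Sb B hB hwf Δ).toLinearMap) (Δ (tre t))) = 0 := by
  set n := deg B hB hwf t with hn
  have hn1 : 1 ≤ n := deg_pos B hB hwf t
  have hz := SL_tree B hB hwf Bp Δ hBp hΔ n t (le_refl n)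
  obtain ⟨z, hzdef⟩ : ∃ z', z' = Δ (tre t) - tre t ⊗ₜ[ℚ] 1 - 1 ⊗ₜ[ℚ] tre t := ⟨_, rfl⟩
  rw [← hzdef] at hz
  have hΔt : Δ (tre t) = tre t ⊗ₜ[ℚ] 1 + 1 ⊗ₜ[ℚ] tre t + z := by rw [hzdef]; ring
  have hΔt' : Δ (tre t) - 1 ⊗ₜ[ℚ] tre t = tre t ⊗ₜ[ℚ] 1 + z := by rw [hzdef]; ring
  have hAb : Ab B hB hwf Δ t
      = - tre t - (LinearMap.mul' ℚ (Hrt T))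
        ((LinearMap.rTensor (Hrt T) (lifA (gB B hB hwf Δ n)).toLinearMap)
          (Δ (tre t) - 1 ⊗ₜ[ℚ] tre t)) := by
    rw [Ab, gB_succ, if_pos rfl]
  have htr : (LinearMap.mul' ℚ (Hrt T))
      ((LinearMap.rTensor (Hrt T) (lifA (gB B hB hwf Δ n)).toLinearMap)
        (Δ (tre t) - 1 ⊗ₜ[ℚ] tre t))
      = (LinearMap.mul' ℚ (Hrt T))
        ((LinearMap.rTensor (Hrt T) (Sb B hB hwf Δ).toLinearMap) z) := by
    rw [hΔt', LinearMap.map_add, LinearMap.map_add, LinearMap.rTensor_tmul]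
    simp only [AlgHom.toLinearMap_apply, LinearMap.map_add, LinearMap.mul'_apply]
    rw [show (lifA (gB B hB hwf Δ n)) (tre t) = gB B hB hwf Δ n t from lifA_tre _ t]
    rw [gB_of_ge B hB hwf Δ n t (le_of_eq hn.symm)]
    rw [mul_rTensor_W B hB hwf Δ (show n - 1 < n by omega) hz]
    simp
  rw [hΔt]
  simp only [LinearMap.map_add, LinearMap.rTensor_tmul, AlgHom.toLinearMap_apply,
    LinearMap.mul'_apply, map_one]
  rw [Sb_tre, hAb, htr]
  ring

end antipode


section counit

/-- the counit to `ℚ` -/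
def epsQ : Hrt T →ₐ[ℚ] ℚ :=
  AddMonoidAlgebra.lift ℚ ℚ (Multiset T)
    { toFun := fun F => ((Multiplicative.toAdd F).map (fun _ => (0:ℚ))).prod
      map_one' := by simp
      map_mul' := fun F G => by simp [Multiset.prod_add] }

lemma epsQ_frt (F : Multiset T) : epsQ (frt F) = e F := by
  rw [epsQ, frt, AddMonoidAlgebra.lift_single]
  by_cases h : F = 0
  · subst h; simp [e_zero]
  · rw [e_ne h]
    obtain ⟨s, hs⟩ := Multiset.exists_mem_of_ne_zero h
    have h0 : (0:ℚ) ∈ Multiset.map (fun _ => (0:ℚ)) F := Multiset.mem_map_of_mem _ hs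
    have h1 : (Multiset.map (fun _ => (0:ℚ)) F).prod = 0 := Multiset.prod_eq_zero h0
    show (1:ℚ) • (Multiset.map (fun _ => (0:ℚ)) F).prod = 0
    rw [h1, smul_zero]

/-- the counit, as a map to `Hrt T` -/
def eps : Hrt T →ₐ[ℚ] Hrt T := (Algebra.ofId ℚ (Hrt T)).comp epsQ

lemma eps_apply (x : Hrt T) : eps x = algebraMap ℚ (Hrt T) (epsQ x) := rfl

lemma eps_tre (t : T) : eps (tre t) = 0 := by
  rw [eps_apply, tre, epsQ_frt, e_ne (by simp), map_zero]

end counit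

section exts
variable {A : Type} [CommSemiring A] [Algebra ℚ A]

lemma algHom_frt (φ : Hrt T →ₐ[ℚ] A) (F : Multiset T) :
    φ (frt F) = (F.map (fun s => φ (tre s))).prod := by
  rw [frt_prod, map_multiset_prod, Multiset.map_map]
  rfl

end exts

section exts2
variable {A : Type} [Semiring A] [Algebra ℚ A]

lemma algHom_frt' (φ ψ : Hrt T →ₐ[ℚ] A) (F : Multiset T)
    (h : ∀ s ∈ F, φ (tre s) = ψ (tre s)) : φ (frt F) = ψ (frt F) := by
  induction F using Multiset.induction with
  | empty => rw [frt_zero, map_one, map_one]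
  | cons s F ih =>
    have hm : frt (s ::ₘ F) = tre s * frt F := by
      rw [tre, frt_mul, Multiset.singleton_add]
    rw [hm, map_mul, map_mul, ih (fun s' hs' => h s' (Multiset.mem_cons_of_mem hs')),
      h s (Multiset.mem_cons_self s F)]

lemma algHom_ext_tre {φ ψ : Hrt T →ₐ[ℚ] A} (h : ∀ t, φ (tre t) = ψ (tre t)) : φ = ψ := by
  apply AddMonoidAlgebra.algHom_ext
  intro F
  exact algHom_frt' φ ψ F (fun s _ => h s)
  exact Subsingleton.elim _ _

end exts2

section bridges

lemma mapA_toLin (φ ψ : Hrt T →ₐ[ℚ] Hrt T) :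
    (Algebra.TensorProduct.map φ ψ).toLinearMap
      = TensorProduct.map φ.toLinearMap ψ.toLinearMap := by
  apply TensorProduct.ext'
  intro x y
  simp

lemma assocA_toLin :
    ((Algebra.TensorProduct.assoc ℚ ℚ ℚ (Hrt T) (Hrt T) (Hrt T)).toAlgHom).toLinearMap
      = (TensorProduct.assoc ℚ (Hrt T) (Hrt T) (Hrt T)).toLinearMap := by
  apply TensorProduct.ext_threefold
  intro x y z
  simp

end bridges

section convo
variable (Bp : Hrt T →ₗ[ℚ] Hrt T) (Δ : Hrt T →ₐ[ℚ] Hrt T ⊗[ℚ] Hrt T)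

/-- convolution of linear maps -/
def conv (f g : Hrt T →ₗ[ℚ] Hrt T) : Hrt T →ₗ[ℚ] Hrt T :=
  (LinearMap.mul' ℚ (Hrt T)) ∘ₗ (TensorProduct.map f g) ∘ₗ Δ.toLinearMap

lemma conv_apply (f g : Hrt T →ₗ[ℚ] Hrt T) (x : Hrt T) :
    conv Δ f g x = (LinearMap.mul' ℚ (Hrt T)) (TensorProduct.map f g (Δ x)) := rfl

/-- convolution of algebra maps -/
def convA (φ ψ : Hrt T →ₐ[ℚ] Hrt T) : Hrt T →ₐ[ℚ] Hrt T :=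
  (Algebra.TensorProduct.lmul' ℚ).comp ((Algebra.TensorProduct.map φ ψ).comp Δ)

lemma convA_toLin (φ ψ : Hrt T →ₐ[ℚ] Hrt T) :
    (convA Δ φ ψ).toLinearMap = conv Δ φ.toLinearMap ψ.toLinearMap := by
  rw [convA, conv, AlgHom.comp_toLinearMap, AlgHom.comp_toLinearMap,
    Algebra.TensorProduct.lmul'_toLinearMap, mapA_toLin]

lemma convA_apply (φ ψ : Hrt T →ₐ[ℚ] Hrt T) (x : Hrt T) :
    convA Δ φ ψ x = conv Δ φ.toLinearMap ψ.toLinearMap x := by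
  rw [← convA_toLin]
  rfl

end convo


section laws
variable (Bp : Hrt T →ₗ[ℚ] Hrt T) (Δ : Hrt T →ₐ[ℚ] Hrt T ⊗[ℚ] Hrt T)

lemma lTensor_eq (f : Hrt T →ₗ[ℚ] Hrt T) :
    LinearMap.lTensor (Hrt T) f = TensorProduct.map LinearMap.id f := rfl

lemma rTensor_eq (f : Hrt T →ₗ[ℚ] Hrt T) :
    LinearMap.rTensor (Hrt T) f = TensorProduct.map f LinearMap.id := rfl

lemma eps_comp_Bp (hBp : ∀ F : Multiset T, Bp (frt F) = tre (B F)) :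
    (eps (T := T)).toLinearMap ∘ₗ Bp = 0 := by
  apply AddMonoidAlgebra.lhom_ext'
  intro G
  apply LinearMap.ext_ring
  simp only [LinearMap.comp_apply, AddMonoidAlgebra.lsingle_apply, LinearMap.zero_apply,
    AlgHom.toLinearMap_apply, LinearMap.zero_comp]
  rw [show AddMonoidAlgebra.single G (1:ℚ) = frt G from rfl, hBp, eps_tre]

lemma counit_right (hB : Function.Bijective B) (hBp : ∀ F : Multiset T, Bp (frt F) = tre (B F))
    (hΔ : ∀ F : Multiset T,
      Δ (tre (B F)) = tre (B F) ⊗ₜ[ℚ] 1 + (LinearMap.lTensor (Hrt T) Bp) (Δ (frt F))) :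
    convA Δ (AlgHom.id ℚ (Hrt T)) eps = AlgHom.id ℚ (Hrt T) := by
  apply algHom_ext_tre
  intro t
  obtain ⟨F, rfl⟩ : ∃ F, B F = t := ⟨Binv B hB t, B_Binv B hB t⟩
  rw [convA_apply, conv_apply, hΔ F]
  have hc1 : TensorProduct.map (AlgHom.id ℚ (Hrt T)).toLinearMap (eps (T := T)).toLinearMap
      ∘ₗ LinearMap.lTensor (Hrt T) Bp
      = TensorProduct.map LinearMap.id ((eps (T := T)).toLinearMap ∘ₗ Bp) := by
    rw [lTensor_eq, ← TensorProduct.map_comp]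
    rfl
  have h2 := LinearMap.congr_fun hc1 (Δ (frt F))
  rw [LinearMap.comp_apply] at h2
  simp only [LinearMap.map_add]
  rw [h2, eps_comp_Bp B Bp hBp, ← lTensor_eq, LinearMap.lTensor_zero,
    LinearMap.zero_apply]
  simp [TensorProduct.map_tmul, LinearMap.mul'_apply]

lemma mul_eps_Bp :
    LinearMap.mul' ℚ (Hrt T) ∘ₗ TensorProduct.map (eps (T := T)).toLinearMap Bp
      = Bp ∘ₗ (LinearMap.mul' ℚ (Hrt T)
          ∘ₗ TensorProduct.map (eps (T := T)).toLinearMap LinearMap.id) := by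
  apply TensorProduct.ext'
  intro x y
  simp only [LinearMap.comp_apply, TensorProduct.map_tmul, LinearMap.mul'_apply,
    AlgHom.toLinearMap_apply, LinearMap.id_coe, id_eq]
  rw [eps_apply, ← Algebra.smul_def, ← Algebra.smul_def, LinearMap.map_smul]

lemma counit_left_tre (hBp : ∀ F : Multiset T, Bp (frt F) = tre (B F))
    (hΔ : ∀ F : Multiset T,
      Δ (tre (B F)) = tre (B F) ⊗ₜ[ℚ] 1 + (LinearMap.lTensor (Hrt T) Bp) (Δ (frt F))) :
    ∀ n (t : T), deg B hB hwf t ≤ n →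
      convA Δ eps (AlgHom.id ℚ (Hrt T)) (tre t) = tre t := by
  intro n
  induction n with
  | zero =>
    intro t ht
    have := deg_pos B hB hwf t
    omega
  | succ n IH =>
    intro t ht
    obtain ⟨F, rfl⟩ : ∃ F, B F = t := ⟨Binv B hB t, B_Binv B hB t⟩
    have hdt := deg_B B hB hwf F
    have hforest : convA Δ eps (AlgHom.id ℚ (Hrt T)) (frt F) = frt F := by
      rw [algHom_frt]
      have : F.map (fun s => convA Δ eps (AlgHom.id ℚ (Hrt T)) (tre s)) = F.map tre :=
        Multiset.map_congr rfl
          (fun s hs => IH s (le_trans (deg_le_degF B hB hwf hs) (by omega)))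
      rw [this, ← frt_prod]
    rw [convA_apply, conv_apply, hΔ F]
    simp only [LinearMap.map_add]
    have hc1 : TensorProduct.map (eps (T := T)).toLinearMap (AlgHom.id ℚ (Hrt T)).toLinearMap
        ∘ₗ LinearMap.lTensor (Hrt T) Bp
        = TensorProduct.map (eps (T := T)).toLinearMap Bp := by
      rw [lTensor_eq, ← TensorProduct.map_comp]
      rfl
    have h2 := LinearMap.congr_fun hc1 (Δ (frt F))
    rw [LinearMap.comp_apply] at h2
    rw [h2]
    have h3 := LinearMap.congr_fun (mul_eps_Bp Bp) (Δ (frt F))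
    simp only [LinearMap.comp_apply] at h3
    rw [h3]
    have h4 : (LinearMap.mul' ℚ (Hrt T))
        (TensorProduct.map (eps (T := T)).toLinearMap LinearMap.id (Δ (frt F))) = frt F := by
      have h5 := hforest
      rw [convA_apply, conv_apply] at h5
      exact h5
    rw [h4, hBp]
    simp only [TensorProduct.map_tmul, AlgHom.toLinearMap_apply, eps_tre,
      LinearMap.mul'_apply, zero_mul, zero_add]

lemma counit_left (hB : Function.Bijective B) (hwf : WellFounded (rel B)) (hBp : ∀ F : Multiset T, Bp (frt F) = tre (B F))
    (hΔ : ∀ F : Multiset T,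
      Δ (tre (B F)) = tre (B F) ⊗ₜ[ℚ] 1 + (LinearMap.lTensor (Hrt T) Bp) (Δ (frt F))) :
    convA Δ eps (AlgHom.id ℚ (Hrt T)) = AlgHom.id ℚ (Hrt T) :=
  algHom_ext_tre (fun t =>
    counit_left_tre B hB hwf Bp Δ hBp hΔ (deg B hB hwf t) t (le_refl _))

end laws


section coassoc
variable (Bp : Hrt T →ₗ[ℚ] Hrt T) (Δ : Hrt T →ₐ[ℚ] Hrt T ⊗[ℚ] Hrt T)

lemma mapA_toLin' {A B' C D : Type} [Semiring A] [Algebra ℚ A] [Semiring B'] [Algebra ℚ B']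
    [Semiring C] [Algebra ℚ C] [Semiring D] [Algebra ℚ D]
    (φ : A →ₐ[ℚ] B') (ψ : C →ₐ[ℚ] D) :
    (Algebra.TensorProduct.map φ ψ).toLinearMap
      = TensorProduct.map φ.toLinearMap ψ.toLinearMap := by
  apply TensorProduct.ext'
  intro x y
  simp

/-- `x ↦ x ⊗ 1` -/
def iota1 : Hrt T →ₗ[ℚ] Hrt T ⊗[ℚ] Hrt T := (TensorProduct.mk ℚ (Hrt T) (Hrt T)).flip 1

lemma iota1_apply (x : Hrt T) : iota1 x = x ⊗ₜ[ℚ] 1 := rfl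

/-- the two sides of coassociativity -/
def CoA1 : Hrt T →ₐ[ℚ] Hrt T ⊗[ℚ] (Hrt T ⊗[ℚ] Hrt T) :=
  (Algebra.TensorProduct.assoc ℚ ℚ ℚ (Hrt T) (Hrt T) (Hrt T)).toAlgHom.comp
    ((Algebra.TensorProduct.map Δ (AlgHom.id ℚ (Hrt T))).comp Δ)

def CoA2 : Hrt T →ₐ[ℚ] Hrt T ⊗[ℚ] (Hrt T ⊗[ℚ] Hrt T) :=
  (Algebra.TensorProduct.map (AlgHom.id ℚ (Hrt T)) Δ).comp Δ

lemma CoA1_apply (x : Hrt T) :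
    CoA1 Δ x = (TensorProduct.assoc ℚ (Hrt T) (Hrt T) (Hrt T)).toLinearMap
      (TensorProduct.map Δ.toLinearMap LinearMap.id (Δ x)) := by
  show (Algebra.TensorProduct.assoc ℚ ℚ ℚ (Hrt T) (Hrt T) (Hrt T)).toAlgHom
      ((Algebra.TensorProduct.map Δ (AlgHom.id ℚ (Hrt T))) (Δ x)) = _
  rw [← AlgHom.toLinearMap_apply, ← AlgHom.toLinearMap_apply, mapA_toLin', assocA_toLin]
  rfl

lemma CoA2_apply (x : Hrt T) :
    CoA2 Δ x = TensorProduct.map LinearMap.id Δ.toLinearMap (Δ x) := by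
  show (Algebra.TensorProduct.map (AlgHom.id ℚ (Hrt T)) Δ) (Δ x) = _
  rw [← AlgHom.toLinearMap_apply, mapA_toLin']
  rfl

lemma Delta_comp_Bp (hBp : ∀ F : Multiset T, Bp (frt F) = tre (B F))
    (hΔ : ∀ F : Multiset T,
      Δ (tre (B F)) = tre (B F) ⊗ₜ[ℚ] 1 + (LinearMap.lTensor (Hrt T) Bp) (Δ (frt F))) :
    Δ.toLinearMap ∘ₗ Bp
      = iota1 ∘ₗ Bp + (LinearMap.lTensor (Hrt T) Bp) ∘ₗ Δ.toLinearMap := by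
  apply AddMonoidAlgebra.lhom_ext'
  intro G
  apply LinearMap.ext_ring
  simp only [LinearMap.comp_apply, AddMonoidAlgebra.lsingle_apply, LinearMap.add_apply,
    AlgHom.toLinearMap_apply]
  rw [show AddMonoidAlgebra.single G (1:ℚ) = frt G from rfl, hBp, hΔ G, iota1_apply]

lemma coassoc_tre (hB : Function.Bijective B) (hwf : WellFounded (rel B))
    (hBp : ∀ F : Multiset T, Bp (frt F) = tre (B F))
    (hΔ : ∀ F : Multiset T,
      Δ (tre (B F)) = tre (B F) ⊗ₜ[ℚ] 1 + (LinearMap.lTensor (Hrt T) Bp) (Δ (frt F))) :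
    ∀ n (t : T), deg B hB hwf t ≤ n → CoA1 Δ (tre t) = CoA2 Δ (tre t) := by
  intro n
  induction n with
  | zero =>
    intro t ht
    have := deg_pos B hB hwf t
    omega
  | succ n IH =>
    intro t ht
    obtain ⟨F, rfl⟩ : ∃ F, B F = t := ⟨Binv B hB t, B_Binv B hB t⟩
    have hdt := deg_B B hB hwf F
    have hforest : CoA1 Δ (frt F) = CoA2 Δ (frt F) :=
      algHom_frt' (CoA1 Δ) (CoA2 Δ) F
        (fun s hs => IH s (le_trans (deg_le_degF B hB hwf hs) (by omega)))
    rw [CoA1_apply, CoA2_apply, hΔ F]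
    simp only [LinearMap.map_add]
    set u := Δ (frt F) with hu
    set asc := (TensorProduct.assoc ℚ (Hrt T) (Hrt T) (Hrt T)).toLinearMap with hasc
    have A1 : asc ((TensorProduct.map Δ.toLinearMap LinearMap.id) (tre (B F) ⊗ₜ[ℚ] 1))
        = tre (B F) ⊗ₜ[ℚ] ((1:Hrt T) ⊗ₜ[ℚ] (1:Hrt T))
          + LinearMap.lTensor (Hrt T) ((iota1 (T := T)) ∘ₗ Bp) u := by
      have ha1 : asc ∘ₗ ((TensorProduct.mk ℚ (Hrt T ⊗[ℚ] Hrt T) (Hrt T)).flip 1)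
          = LinearMap.lTensor (Hrt T) (iota1 (T := T)) := by
        apply TensorProduct.ext'
        intro x y
        simp [hasc, iota1_apply]
      have ha2 := LinearMap.congr_fun ha1 (Δ (tre (B F)))
      simp only [LinearMap.comp_apply, LinearMap.flip_apply, TensorProduct.mk_apply] at ha2
      rw [TensorProduct.map_tmul]
      have : (LinearMap.id : Hrt T →ₗ[ℚ] Hrt T) 1 = 1 := rfl
      rw [this, AlgHom.toLinearMap_apply, ha2, hΔ F, LinearMap.map_add, LinearMap.lTensor_tmul, iota1_apply,
        ← LinearMap.comp_apply, ← LinearMap.lTensor_comp]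
    have A2 : asc ((TensorProduct.map Δ.toLinearMap LinearMap.id)
          ((LinearMap.lTensor (Hrt T) Bp) u))
        = LinearMap.lTensor (Hrt T) ((LinearMap.lTensor (Hrt T) Bp) ∘ₗ Δ.toLinearMap) u := by
      have e2 : TensorProduct.map Δ.toLinearMap LinearMap.id ∘ₗ LinearMap.lTensor (Hrt T) Bp
          = LinearMap.lTensor (Hrt T ⊗[ℚ] Hrt T) Bp
            ∘ₗ TensorProduct.map Δ.toLinearMap LinearMap.id := by
        apply TensorProduct.ext'
        intro x y
        simp
      have e2' := LinearMap.congr_fun e2 u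
      simp only [LinearMap.comp_apply] at e2'
      rw [e2']
      have e3 : asc ∘ₗ LinearMap.lTensor (Hrt T ⊗[ℚ] Hrt T) Bp
          = LinearMap.lTensor (Hrt T) (LinearMap.lTensor (Hrt T) Bp) ∘ₗ asc := by
        apply TensorProduct.ext_threefold
        intro x y z
        simp [hasc]
      have e3' := LinearMap.congr_fun e3 ((TensorProduct.map Δ.toLinearMap LinearMap.id) u)
      simp only [LinearMap.comp_apply] at e3'
      rw [e3']
      have e4 : asc ((TensorProduct.map Δ.toLinearMap LinearMap.id) u)
          = TensorProduct.map LinearMap.id Δ.toLinearMap u := by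
        have h5 := hforest
        rw [CoA1_apply, CoA2_apply] at h5
        exact h5
      rw [e4]
      rw [show TensorProduct.map LinearMap.id Δ.toLinearMap u
          = LinearMap.lTensor (Hrt T) Δ.toLinearMap u from rfl,
        ← LinearMap.comp_apply, ← LinearMap.lTensor_comp]
    have B1 : TensorProduct.map LinearMap.id Δ.toLinearMap (tre (B F) ⊗ₜ[ℚ] 1)
        = tre (B F) ⊗ₜ[ℚ] ((1:Hrt T) ⊗ₜ[ℚ] (1:Hrt T)) := by
      rw [TensorProduct.map_tmul]
      have h1 : (LinearMap.id : Hrt T →ₗ[ℚ] Hrt T) (tre (B F)) = tre (B F) := rfl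
      have h2 : Δ.toLinearMap 1 = (1:Hrt T) ⊗ₜ[ℚ] (1:Hrt T) := by
        show Δ 1 = _
        rw [map_one, Algebra.TensorProduct.one_def]
      rw [h1, h2]
    have B2 : TensorProduct.map LinearMap.id Δ.toLinearMap
          ((LinearMap.lTensor (Hrt T) Bp) u)
        = LinearMap.lTensor (Hrt T) ((iota1 (T := T)) ∘ₗ Bp) u
          + LinearMap.lTensor (Hrt T) ((LinearMap.lTensor (Hrt T) Bp) ∘ₗ Δ.toLinearMap) u := by
      rw [show TensorProduct.map LinearMap.id Δ.toLinearMap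
          ((LinearMap.lTensor (Hrt T) Bp) u)
          = (LinearMap.lTensor (Hrt T) Δ.toLinearMap ∘ₗ LinearMap.lTensor (Hrt T) Bp) u
          from rfl, ← LinearMap.lTensor_comp,
        Delta_comp_Bp B Bp Δ hBp hΔ, LinearMap.lTensor_add, LinearMap.add_apply]
    rw [A1, A2, B1, B2]
    abel

lemma coassocA (hB : Function.Bijective B) (hwf : WellFounded (rel B))
    (hBp : ∀ F : Multiset T, Bp (frt F) = tre (B F))
    (hΔ : ∀ F : Multiset T,
      Δ (tre (B F)) = tre (B F) ⊗ₜ[ℚ] 1 + (LinearMap.lTensor (Hrt T) Bp) (Δ (frt F))) :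
    CoA1 Δ = CoA2 Δ :=
  algHom_ext_tre (fun t =>
    coassoc_tre B Bp Δ hB hwf hBp hΔ (deg B hB hwf t) t (le_refl _))

lemma coassoc_lin (hB : Function.Bijective B) (hwf : WellFounded (rel B))
    (hBp : ∀ F : Multiset T, Bp (frt F) = tre (B F))
    (hΔ : ∀ F : Multiset T,
      Δ (tre (B F)) = tre (B F) ⊗ₜ[ℚ] 1 + (LinearMap.lTensor (Hrt T) Bp) (Δ (frt F)))
    (x : Hrt T) :
    (TensorProduct.assoc ℚ (Hrt T) (Hrt T) (Hrt T)).toLinearMap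
      (TensorProduct.map Δ.toLinearMap LinearMap.id (Δ x))
    = TensorProduct.map LinearMap.id Δ.toLinearMap (Δ x) := by
  rw [← CoA1_apply, ← CoA2_apply, coassocA B Bp Δ hB hwf hBp hΔ]

lemma conv_assoc (hB : Function.Bijective B) (hwf : WellFounded (rel B))
    (hBp : ∀ F : Multiset T, Bp (frt F) = tre (B F))
    (hΔ : ∀ F : Multiset T,
      Δ (tre (B F)) = tre (B F) ⊗ₜ[ℚ] 1 + (LinearMap.lTensor (Hrt T) Bp) (Δ (frt F)))
    (f g h : Hrt T →ₗ[ℚ] Hrt T) :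
    conv Δ (conv Δ f g) h = conv Δ f (conv Δ g h) := by
  have collapse1 : (TensorProduct.map (LinearMap.mul' ℚ (Hrt T)) LinearMap.id)
      ∘ₗ (TensorProduct.map (TensorProduct.map f g) h)
      ∘ₗ (TensorProduct.map Δ.toLinearMap LinearMap.id)
      = TensorProduct.map (conv Δ f g) h := by
    rw [← TensorProduct.map_comp, ← TensorProduct.map_comp, LinearMap.comp_id,
      LinearMap.id_comp]
    rfl
  have collapse2 : (TensorProduct.map LinearMap.id (LinearMap.mul' ℚ (Hrt T)))
      ∘ₗ (TensorProduct.map f (TensorProduct.map g h))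
      ∘ₗ (TensorProduct.map LinearMap.id Δ.toLinearMap)
      = TensorProduct.map f (conv Δ g h) := by
    rw [← TensorProduct.map_comp, ← TensorProduct.map_comp, LinearMap.comp_id,
      LinearMap.id_comp]
    rfl
  have hassocmul : (LinearMap.mul' ℚ (Hrt T))
      ∘ₗ TensorProduct.map (LinearMap.mul' ℚ (Hrt T)) LinearMap.id
      = (LinearMap.mul' ℚ (Hrt T))
        ∘ₗ (TensorProduct.map LinearMap.id (LinearMap.mul' ℚ (Hrt T)))
        ∘ₗ (TensorProduct.assoc ℚ (Hrt T) (Hrt T) (Hrt T)).toLinearMap := by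
    apply TensorProduct.ext_threefold
    intro x y z
    simp [mul_assoc]
  have hnat : (TensorProduct.assoc ℚ (Hrt T) (Hrt T) (Hrt T)).toLinearMap
      ∘ₗ TensorProduct.map (TensorProduct.map f g) h
      = TensorProduct.map f (TensorProduct.map g h)
        ∘ₗ (TensorProduct.assoc ℚ (Hrt T) (Hrt T) (Hrt T)).toLinearMap := by
    apply TensorProduct.ext_threefold
    intro x y z
    simp
  apply LinearMap.ext
  intro x
  rw [conv_apply, conv_apply, ← LinearMap.congr_fun collapse1 (Δ x),
    ← LinearMap.congr_fun collapse2 (Δ x)]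
  simp only [LinearMap.comp_apply]
  rw [← LinearMap.comp_apply (LinearMap.mul' ℚ (Hrt T)), LinearMap.congr_fun hassocmul]
  simp only [LinearMap.comp_apply]
  rw [← LinearMap.comp_apply _ (TensorProduct.map (TensorProduct.map f g) h),
    LinearMap.congr_fun hnat]
  simp only [LinearMap.comp_apply]
  rw [coassoc_lin B Bp Δ hB hwf hBp hΔ x]

lemma conv_eps_right (hB : Function.Bijective B)
    (hBp : ∀ F : Multiset T, Bp (frt F) = tre (B F))
    (hΔ : ∀ F : Multiset T,
      Δ (tre (B F)) = tre (B F) ⊗ₜ[ℚ] 1 + (LinearMap.lTensor (Hrt T) Bp) (Δ (frt F)))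
    (f : Hrt T →ₗ[ℚ] Hrt T) :
    conv Δ f (eps (T := T)).toLinearMap = f := by
  have h1 : (LinearMap.mul' ℚ (Hrt T)) ∘ₗ TensorProduct.map f (eps (T := T)).toLinearMap
      = f ∘ₗ ((LinearMap.mul' ℚ (Hrt T))
        ∘ₗ TensorProduct.map LinearMap.id (eps (T := T)).toLinearMap) := by
    apply TensorProduct.ext'
    intro x y
    simp only [LinearMap.comp_apply, TensorProduct.map_tmul, LinearMap.mul'_apply,
      AlgHom.toLinearMap_apply, LinearMap.id_coe, id_eq]
    rw [eps_apply, mul_comm, ← Algebra.smul_def, mul_comm x, ← Algebra.smul_def,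
      LinearMap.map_smul]
  have h2 : conv Δ LinearMap.id (eps (T := T)).toLinearMap = LinearMap.id := by
    have h3 := congrArg AlgHom.toLinearMap (counit_right B Bp Δ hB hBp hΔ)
    rw [convA_toLin] at h3
    exact h3
  apply LinearMap.ext
  intro x
  have h1' := LinearMap.congr_fun h1 (Δ x)
  simp only [LinearMap.comp_apply] at h1'
  rw [conv_apply, h1']
  rw [show (LinearMap.mul' ℚ (Hrt T))
      ((TensorProduct.map LinearMap.id (eps (T := T)).toLinearMap) (Δ x))
      = conv Δ LinearMap.id (eps (T := T)).toLinearMap x from rfl, h2]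
  rfl

lemma conv_eps_left (hB : Function.Bijective B) (hwf : WellFounded (rel B))
    (hBp : ∀ F : Multiset T, Bp (frt F) = tre (B F))
    (hΔ : ∀ F : Multiset T,
      Δ (tre (B F)) = tre (B F) ⊗ₜ[ℚ] 1 + (LinearMap.lTensor (Hrt T) Bp) (Δ (frt F)))
    (f : Hrt T →ₗ[ℚ] Hrt T) :
    conv Δ (eps (T := T)).toLinearMap f = f := by
  have h1 : (LinearMap.mul' ℚ (Hrt T)) ∘ₗ TensorProduct.map (eps (T := T)).toLinearMap f
      = f ∘ₗ ((LinearMap.mul' ℚ (Hrt T))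
        ∘ₗ TensorProduct.map (eps (T := T)).toLinearMap LinearMap.id) := by
    apply TensorProduct.ext'
    intro x y
    simp only [LinearMap.comp_apply, TensorProduct.map_tmul, LinearMap.mul'_apply,
      AlgHom.toLinearMap_apply, LinearMap.id_coe, id_eq]
    rw [eps_apply, ← Algebra.smul_def, ← Algebra.smul_def, LinearMap.map_smul]
  have h2 : conv Δ (eps (T := T)).toLinearMap LinearMap.id = LinearMap.id := by
    have h3 := congrArg AlgHom.toLinearMap (counit_left B Bp Δ hB hwf hBp hΔ)
    rw [convA_toLin] at h3
    exact h3
  apply LinearMap.ext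
  intro x
  have h1' := LinearMap.congr_fun h1 (Δ x)
  simp only [LinearMap.comp_apply] at h1'
  rw [conv_apply, h1']
  rw [show (LinearMap.mul' ℚ (Hrt T))
      ((TensorProduct.map (eps (T := T)).toLinearMap LinearMap.id) (Δ x))
      = conv Δ (eps (T := T)).toLinearMap LinearMap.id x from rfl, h2]
  rfl

end coassoc


section final
variable (Bp : Hrt T →ₗ[ℚ] Hrt T) (Δ : Hrt T →ₐ[ℚ] Hrt T ⊗[ℚ] Hrt T)

lemma convA_id_Sa (hBp : ∀ F : Multiset T, Bp (frt F) = tre (B F))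
    (hΔ : ∀ F : Multiset T,
      Δ (tre (B F)) = tre (B F) ⊗ₜ[ℚ] 1 + (LinearMap.lTensor (Hrt T) Bp) (Δ (frt F))) :
    convA Δ (AlgHom.id ℚ (Hrt T)) (Sa B hB hwf Δ) = eps := by
  apply algHom_ext_tre
  intro t
  rw [convA_apply, eps_tre]
  exact left_id B hB hwf Bp Δ hBp hΔ t

lemma convA_Sb_id (hBp : ∀ F : Multiset T, Bp (frt F) = tre (B F))
    (hΔ : ∀ F : Multiset T,
      Δ (tre (B F)) = tre (B F) ⊗ₜ[ℚ] 1 + (LinearMap.lTensor (Hrt T) Bp) (Δ (frt F))) :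
    convA Δ (Sb B hB hwf Δ) (AlgHom.id ℚ (Hrt T)) = eps := by
  apply algHom_ext_tre
  intro t
  rw [convA_apply, eps_tre]
  exact right_id B hB hwf Bp Δ hBp hΔ t

lemma Sa_eq_Sb (hBp : ∀ F : Multiset T, Bp (frt F) = tre (B F))
    (hΔ : ∀ F : Multiset T,
      Δ (tre (B F)) = tre (B F) ⊗ₜ[ℚ] 1 + (LinearMap.lTensor (Hrt T) Bp) (Δ (frt F))) :
    (Sa B hB hwf Δ).toLinearMap = (Sb B hB hwf Δ).toLinearMap := by
  have h1 : conv Δ LinearMap.id (Sa B hB hwf Δ).toLinearMap = (eps (T := T)).toLinearMap := by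
    have h := congrArg AlgHom.toLinearMap (convA_id_Sa B hB hwf Bp Δ hBp hΔ)
    rw [convA_toLin] at h
    exact h
  have h2 : conv Δ (Sb B hB hwf Δ).toLinearMap LinearMap.id = (eps (T := T)).toLinearMap := by
    have h := congrArg AlgHom.toLinearMap (convA_Sb_id B hB hwf Bp Δ hBp hΔ)
    rw [convA_toLin] at h
    exact h
  have c1 : conv Δ (eps (T := T)).toLinearMap (Sa B hB hwf Δ).toLinearMap
      = (Sa B hB hwf Δ).toLinearMap :=
    conv_eps_left B Bp Δ hB hwf hBp hΔ _
  have c2 : conv Δ (Sb B hB hwf Δ).toLinearMap (eps (T := T)).toLinearMap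
      = (Sb B hB hwf Δ).toLinearMap :=
    conv_eps_right B Bp Δ hB hBp hΔ _
  have c3 := conv_assoc B Bp Δ hB hwf hBp hΔ (Sb B hB hwf Δ).toLinearMap LinearMap.id
    (Sa B hB hwf Δ).toLinearMap
  rw [h2, h1, c1, c2] at c3
  exact c3

end final

end main
end RTproof

/-- **Existence of the antipode.**
`T` is the type of rooted trees (with grafting bijection `B = B₊` and induction
principle) and `Δ` is the admissible-cut coproduct, characterized by
`Δ(B₊(w)) = B₊(w) ⊗ 1 + (id ⊗ B₊)(Δ w)`.  The graded connected bialgebra of rooted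
trees admits an antipode `S`: a unital linear map which is a two-sided convolution
inverse of the identity; on a tree `t` (where the counit vanishes) this says
`0 = m((id ⊗ S)(Δ t)) = t + S(t) + Σ_{c proper admissible cut} P_c(t)·S(R_c(t))`,
i.e. `S` satisfies the recursion
`S(t) = -t - Σ_{c proper admissible cut} P_c(t)·S(R_c(t))`. -/
theorem rootedTree_antipode_exists
    (T : Type) (B : Multiset T → T) (hB : Function.Bijective B)
    (hind : ∀ P : T → Prop,
      (∀ F : Multiset T, (∀ s ∈ F, P s) → P (B F)) → ∀ t, P t)
    (Bp : Hrt T →ₗ[ℚ] Hrt T) (hBp : ∀ F : Multiset T, Bp (frt F) = tre (B F))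
    (Δ : Hrt T →ₐ[ℚ] Hrt T ⊗[ℚ] Hrt T)
    (hΔ : ∀ F : Multiset T,
      Δ (tre (B F)) = tre (B F) ⊗ₜ[ℚ] 1 + (LinearMap.lTensor (Hrt T) Bp) (Δ (frt F))) :
    ∃ S : Hrt T →ₗ[ℚ] Hrt T, S 1 = 1 ∧
      ∀ t : T,
        (LinearMap.mul' ℚ (Hrt T)) ((LinearMap.lTensor (Hrt T) S) (Δ (tre t))) = 0 ∧
        (LinearMap.mul' ℚ (Hrt T)) ((LinearMap.rTensor (Hrt T) S) (Δ (tre t))) = 0 := by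
  have hwf : WellFounded (RTproof.rel B) := RTproof.rel_wf B hB hind
  refine ⟨(RTproof.Sa B hB hwf Δ).toLinearMap, ?_, ?_⟩
  · show (RTproof.Sa B hB hwf Δ) 1 = 1
    exact map_one _
  · intro t
    constructor
    · exact RTproof.left_id B hB hwf Bp Δ hBp hΔ t
    · rw [RTproof.Sa_eq_Sb B hB hwf Bp Δ hBp hΔ]
      exact RTproof.right_id B hB hwf Bp Δ hBp hΔ t

end
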